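/- Let A : [a,b] → M₂(ℝ) be continuous with A(t) symmetric and A(t) having distinct eigenvalues for every t ∈ [a,b]. Then there exists a continuous O : [a,b] → M₂(ℝ) such that O(t) is orthogonal and O(t)ᵀ A(t) O(t) is diagonal for all t ∈ [a,b]. -/

import Mathlib

open Matrix Set

lemma myUnionClosed {α β : Type*} [TopologicalSpace α] [TopologicalSpace β]
    {f : α → β} {s t : Set α} (hs : IsClosed s) (ht : IsClosed t)
    (hfs : ContinuousOn f s) (hft : ContinuousOn f t) : ContinuousOn f (s ∪ t) := by
  intro x hx
  rcases hx with hxs | hxt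
  · by_cases hxt : x ∈ t
    · exact (hfs x hxs).union (hft x hxt)
    · refine (hfs x hxs).mono_of_mem_nhdsWithin ?_
      filter_upwards [self_mem_nhdsWithin,
        mem_nhdsWithin_of_mem_nhds (ht.isOpen_compl.mem_nhds hxt)] with y hy hy'
      exact hy.resolve_right hy'
  · by_cases hxs : x ∈ s
    · exact (hfs x hxs).union (hft x hxt)
    · refine (hft x hxt).mono_of_mem_nhdsWithin ?_
      filter_upwards [self_mem_nhdsWithin,
        mem_nhdsWithin_of_mem_nhds (hs.isOpen_compl.mem_nhds hxs)] with y hy hy'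
      exact hy.resolve_left hy'

lemma myLift (a b : ℝ) (hab : a ≤ b) (w : ℝ → ℂ)
    (hw : ContinuousOn w (Icc a b)) (hw0 : ∀ t ∈ Icc a b, w t ≠ 0) :
    ∃ φ : ℝ → ℝ, ContinuousOn φ (Icc a b) ∧
      ∀ t ∈ Icc a b, w t = (norm (w t) : ℂ) * Complex.exp (φ t * Complex.I) := by
  set S : Set ℝ := {c | c ∈ Icc a b ∧ ∃ φ : ℝ → ℝ, ContinuousOn φ (Icc a c) ∧
      ∀ t ∈ Icc a c, w t = (norm (w t) : ℂ) * Complex.exp (φ t * Complex.I)} with hS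
  have haS : a ∈ S := by
    refine ⟨⟨le_refl a, hab⟩, fun _ => (w a).arg, continuousOn_const, ?_⟩
    intro t ht
    have : t = a := le_antisymm ht.2 ht.1
    subst this
    exact (Complex.norm_mul_exp_arg_mul_I (w t)).symm
  have hbdd : BddAbove S := ⟨b, fun x hx => hx.1.2⟩
  have hne : S.Nonempty := ⟨a, haS⟩
  set c := sSup S with hc
  have hcab : c ∈ Icc a b := ⟨le_csSup hbdd haS, csSup_le hne fun x hx => hx.1.2⟩
  set u : ℝ → ℂ := fun t => w t * (starRingEnd ℂ) (w c) with hu_def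
  have hu : ContinuousOn u (Icc a b) := hw.mul continuousOn_const
  have hupos : 0 < (u c).re := by
    have : u c = (Complex.normSq (w c) : ℂ) := Complex.mul_conj (w c)
    rw [this]
    simpa using Complex.normSq_pos.mpr (hw0 c hcab)
  -- find δ
  have hmem : u ⁻¹' {z : ℂ | 0 < z.re} ∈ nhdsWithin c (Icc a b) := by
    exact hu c hcab (IsOpen.mem_nhds (isOpen_lt continuous_const Complex.continuous_re) hupos)
  obtain ⟨δ, hδpos, hball⟩ := Metric.mem_nhdsWithin_iff.mp hmem
  obtain ⟨c₁, hc₁S, hc₁gt⟩ := exists_lt_of_lt_csSup hne (show c - δ/2 < c by linarith)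
  have hc₁c : c₁ ≤ c := le_csSup hbdd hc₁S
  obtain ⟨hc₁ab, φ₁, hφ₁cont, hφ₁⟩ := hc₁S
  set c₂ := min (c + δ/2) b with hc₂def
  have hcc₂ : c ≤ c₂ := le_min (by linarith) hcab.2
  have hc₁c₂ : c₁ ≤ c₂ := le_trans hc₁c hcc₂
  have hD : ∀ t ∈ Icc c₁ c₂, t ∈ Icc a b ∧ 0 < (u t).re := by
    intro t ht
    have htab : t ∈ Icc a b := ⟨le_trans hc₁ab.1 ht.1, le_trans ht.2 (min_le_right _ _)⟩
    refine ⟨htab, ?_⟩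
    have : t ∈ Metric.ball c δ ∩ Icc a b := by
      refine ⟨?_, htab⟩
      rw [Metric.mem_ball, Real.dist_eq, abs_sub_lt_iff]
      constructor
      · have := le_trans ht.2 (min_le_left _ _); linarith
      · have := le_trans (le_of_lt hc₁gt) ht.1; linarith
    exact hball this
  set α : ℝ → ℝ := fun t => (u t).arg with hα_def
  have hαcont : ContinuousOn α (Icc c₁ c₂) := by
    intro t ht
    exact (Complex.continuousAt_arg (Or.inl (hD t ht).2)).comp_continuousWithinAt
      ((hu t (hD t ht).1).mono fun x hx => (hD x hx).1)
  set φ : ℝ → ℝ := fun t => if t ≤ c₁ then φ₁ t else α t - α c₁ + φ₁ c₁ with hφ_def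
  have hφcont : ContinuousOn φ (Icc a c₂) := by
    rw [← Icc_union_Icc_eq_Icc hc₁ab.1 hc₁c₂]
    refine myUnionClosed isClosed_Icc isClosed_Icc ?_ ?_
    · refine hφ₁cont.congr fun t ht => ?_
      simp [hφ_def, if_pos ht.2]
    · have hc2 : ContinuousOn (fun t => α t - α c₁ + φ₁ c₁) (Icc c₁ c₂) :=
        (hαcont.sub continuousOn_const).add continuousOn_const
      refine hc2.congr fun t ht => ?_
      by_cases h : t ≤ c₁
      · have : t = c₁ := le_antisymm h ht.1
        subst this
        simp [hφ_def]
      · simp [hφ_def, if_neg h]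
  have hφprop : ∀ t ∈ Icc a c₂, w t = (norm (w t) : ℂ) * Complex.exp (φ t * Complex.I) := by
    intro t ht
    by_cases h : t ≤ c₁
    · have : φ t = φ₁ t := if_pos h
      rw [this]
      exact hφ₁ t ⟨ht.1, h⟩
    · push_neg at h
      have htD : t ∈ Icc c₁ c₂ := ⟨le_of_lt h, ht.2⟩
      have hφt : φ t = α t - α c₁ + φ₁ c₁ := if_neg (not_le.mpr h)
      rw [hφt]
      have h1 : (norm (u t) : ℂ) * Complex.exp (α t * Complex.I) = u t :=
        Complex.norm_mul_exp_arg_mul_I (u t)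
      have h2 : (norm (u c₁) : ℂ) * Complex.exp (α c₁ * Complex.I) = u c₁ :=
        Complex.norm_mul_exp_arg_mul_I (u c₁)
      have h3 : w c₁ = (norm (w c₁) : ℂ) * Complex.exp (φ₁ c₁ * Complex.I) :=
        hφ₁ c₁ ⟨hc₁ab.1, le_refl c₁⟩
      have hexp : Complex.exp (((α t - α c₁ + φ₁ c₁ : ℝ) : ℂ) * Complex.I) =
          Complex.exp (α t * Complex.I) * (Complex.exp (α c₁ * Complex.I))⁻¹ *
            Complex.exp (φ₁ c₁ * Complex.I) := by
        rw [← Complex.exp_neg, ← Complex.exp_add, ← Complex.exp_add]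
        congr 1
        push_cast
        ring
      rw [hexp]
      have hwt : w t ≠ 0 := hw0 t (hD t htD).1
      have hwc : w c ≠ 0 := hw0 c hcab
      have hwc₁ : w c₁ ≠ 0 := hw0 c₁ ⟨hc₁ab.1, le_trans hc₁c hcab.2⟩
      have hat : (norm (w t) : ℂ) ≠ 0 := by simpa using hwt
      have hac : (norm (w c) : ℂ) ≠ 0 := by simpa using hwc
      have hac₁ : (norm (w c₁) : ℂ) ≠ 0 := by simpa using hwc₁
      have hconj : (starRingEnd ℂ) (w c) ≠ 0 := by simpa using hwc
      have hut : u t ≠ 0 := mul_ne_zero hwt hconj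
      have huc₁ : u c₁ ≠ 0 := mul_ne_zero hwc₁ hconj
      have haut : norm (u t) = norm (w t) * norm (w c) := by
        simp [hu_def, _root_.map_mul]
      have hauc₁ : norm (u c₁) = norm (w c₁) * norm (w c) := by
        simp [hu_def, _root_.map_mul]
      have hautne : (norm (u t) : ℂ) ≠ 0 := by simpa using hut
      have hauc₁ne : (norm (u c₁) : ℂ) ≠ 0 := by simpa using huc₁
      have het : Complex.exp (α t * Complex.I) = u t / (norm (u t) : ℂ) := by
        rw [eq_div_iff hautne, mul_comm]; exact h1
      have hec₁ : Complex.exp (α c₁ * Complex.I) = u c₁ / (norm (u c₁) : ℂ) := by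
        rw [eq_div_iff hauc₁ne, mul_comm]; exact h2
      have hep : Complex.exp (φ₁ c₁ * Complex.I) = w c₁ / (norm (w c₁) : ℂ) := by
        rw [eq_div_iff hac₁, mul_comm]; exact h3.symm
      rw [het, hec₁, hep, haut, hauc₁]
      push_cast
      field_simp [hu_def]
      ring
  -- conclude
  have hc₂S : c₂ ∈ S := ⟨⟨le_trans hcab.1 hcc₂, min_le_right _ _⟩, φ, hφcont, hφprop⟩
  have hbc : b ≤ c := by
    by_contra hcb
    push_neg at hcb
    have : c < c₂ := lt_min (by linarith) hcb
    exact absurd (le_csSup hbdd hc₂S) (not_le.mpr this)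
  have hbc₂ : b ≤ c₂ := le_trans hbc hcc₂
  exact ⟨φ, hφcont.mono (Icc_subset_Icc_right hbc₂),
    fun t ht => hφprop t ⟨ht.1, le_trans ht.2 hbc₂⟩⟩

lemma myMatCont {f : ℝ → Matrix (Fin 2) (Fin 2) ℝ} {s : Set ℝ}
    (h : ∀ i j, ContinuousOn (fun t => f t i j) s) : ContinuousOn f s := by
  have : ContinuousOn (fun t (i j : Fin 2) => f t i j) s := by
    apply continuousOn_pi.mpr
    intro i
    exact continuousOn_pi.mpr fun j => h i j
  exact this

def HasDistinctEigenvaluesR (A : Matrix (Fin 2) (Fin 2) ℝ) : Prop :=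
  ∃ mu1 mu2 : ℝ, mu1 ≠ mu2 ∧
    ∀ x : ℝ, det (x • (1 : Matrix (Fin 2) (Fin 2) ℝ) - A) = 0 ↔
      x = mu1 ∨ x = mu2

theorem continuous_diagonalization_2x2_real
    (a b : ℝ) (hab : a ≤ b) (A : ℝ → Matrix (Fin 2) (Fin 2) ℝ)
    (hcont : ContinuousOn A (Icc a b))
    (hsymm : ∀ t ∈ Icc a b, (A t).IsSymm)
    (hdist : ∀ t ∈ Icc a b, HasDistinctEigenvaluesR (A t)) :
    ∃ O : ℝ → Matrix (Fin 2) (Fin 2) ℝ,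
      ContinuousOn O (Icc a b) ∧
      ∀ t ∈ Icc a b, (O t)ᵀ * O t = 1 ∧ ((O t)ᵀ * A t * O t).IsDiag := by
  have hentry : ∀ i j, ContinuousOn (fun t => A t i j) (Icc a b) := by
    intro i j
    exact ((continuous_apply j).comp (continuous_apply i)).comp_continuousOn hcont
  set w : ℝ → ℂ := fun t => (((A t 0 0 - A t 1 1) / 2 : ℝ) : ℂ) + ((A t 0 1 : ℝ) : ℂ) * Complex.I
    with hw_def
  have hwcont : ContinuousOn w (Icc a b) := by
    apply ContinuousOn.add
    · exact Complex.continuous_ofReal.comp_continuousOn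
        (((hentry 0 0).sub (hentry 1 1)).div_const 2)
    · exact (Complex.continuous_ofReal.comp_continuousOn (hentry 0 1)).mul continuousOn_const
  have hw0 : ∀ t ∈ Icc a b, w t ≠ 0 := by
    intro t ht hw0
    have hre : (A t 0 0 - A t 1 1) / 2 = 0 := by
      have := congrArg Complex.re hw0; simpa [hw_def] using this
    have him : A t 0 1 = 0 := by
      have := congrArg Complex.im hw0; simpa [hw_def] using this
    have hpr : A t 0 0 = A t 1 1 := by linarith
    have h10 : A t 1 0 = 0 := by
      have := (hsymm t ht).apply 0 1
      rw [← this] at him; exact him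
    obtain ⟨mu1, mu2, hne, hiff⟩ := hdist t ht
    have hdet : ∀ x : ℝ, det (x • (1 : Matrix (Fin 2) (Fin 2) ℝ) - A t) = (x - A t 0 0) ^ 2 := by
      intro x
      rw [Matrix.det_fin_two]
      simp [Matrix.smul_apply, Matrix.one_apply, him, h10, hpr]
      ring
    have h1 : mu1 = A t 0 0 := by
      have := (hiff mu1).mpr (Or.inl rfl)
      rw [hdet] at this
      nlinarith [sq_nonneg (mu1 - A t 0 0)]
    have h2 : mu2 = A t 0 0 := by
      have := (hiff mu2).mpr (Or.inr rfl)
      rw [hdet] at this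
      nlinarith [sq_nonneg (mu2 - A t 0 0)]
    exact hne (h1.trans h2.symm)
  obtain ⟨φ, hφcont, hφ⟩ := myLift a b hab w hwcont hw0
  set θ : ℝ → ℝ := fun t => φ t / 2 with hθ_def
  set O : ℝ → Matrix (Fin 2) (Fin 2) ℝ :=
    fun t => !![Real.cos (θ t), -Real.sin (θ t); Real.sin (θ t), Real.cos (θ t)] with hO_def
  have hθcont : ContinuousOn θ (Icc a b) := hφcont.div_const 2
  refine ⟨O, ?_, ?_⟩
  · apply myMatCont
    intro i j
    fin_cases i <;> fin_cases j <;> simp [hO_def] <;>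
      [exact Real.continuous_cos.comp_continuousOn hθcont;
       exact (Real.continuous_sin.comp_continuousOn hθcont).neg;
       exact Real.continuous_sin.comp_continuousOn hθcont;
       exact Real.continuous_cos.comp_continuousOn hθcont]
  · intro t ht
    have hkey := hφ t ht
    set ρ := norm (w t) with hρ_def
    have hcos : (A t 0 0 - A t 1 1) / 2 = ρ * Real.cos (φ t) := by
      have := congrArg Complex.re hkey
      simpa [hw_def, Complex.exp_ofReal_mul_I_re] using this
    have hsin : A t 0 1 = ρ * Real.sin (φ t) := by
      have := congrArg Complex.im hkey
      simpa [hw_def, Complex.exp_ofReal_mul_I_im] using this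
    have hφ2θ : φ t = 2 * θ t := by simp [hθ_def]; ring
    rw [hφ2θ] at hcos hsin
    rw [Real.cos_two_mul] at hcos
    rw [Real.sin_two_mul] at hsin
    have hsq : Real.sin (θ t) ^ 2 = 1 - Real.cos (θ t) ^ 2 := Real.sin_sq (θ t)
    have h10 : A t 1 0 = A t 0 1 := (hsymm t ht).apply 0 1
    set C := Real.cos (θ t) with hC_def
    set Sn := Real.sin (θ t) with hSn_def
    have hCS : Sn ^ 2 + C ^ 2 = 1 := Real.sin_sq_add_cos_sq (θ t)
    have hOt : (O t)ᵀ = !![C, Sn; -Sn, C] := by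
      ext i j
      fin_cases i <;> fin_cases j <;> simp [hO_def, hC_def, hSn_def]
    have hOeq : O t = !![C, -Sn; Sn, C] := rfl
    have hA : A t = !![A t 0 0, A t 0 1; A t 0 1, A t 1 1] := by
      have h := Matrix.eta_fin_two (A t)
      rw [h10] at h
      exact h
    constructor
    · rw [hOt, hOeq, Matrix.mul_fin_two, Matrix.one_fin_two]
      ext i j
      fin_cases i <;> fin_cases j <;> simp <;> nlinarith [hCS]
    · rw [hOt, hOeq, hA, Matrix.mul_fin_two, Matrix.mul_fin_two]
      intro i j hij
      fin_cases i <;> fin_cases j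
      · exact absurd rfl hij
      · simp only [Fin.mk_zero, Fin.mk_one, Matrix.of_apply, Matrix.cons_val', Matrix.cons_val_zero, Matrix.cons_val_one, Matrix.head_cons,
          Matrix.empty_val', Matrix.cons_val_fin_one, Matrix.head_fin_const]
        linear_combination (C^2 - Sn^2) * hsin - 2*Sn*C*hcos - 2*ρ*Sn*C*hsq
      · simp only [Fin.mk_zero, Fin.mk_one, Matrix.of_apply, Matrix.cons_val', Matrix.cons_val_zero, Matrix.cons_val_one, Matrix.head_cons,
          Matrix.empty_val', Matrix.cons_val_fin_one, Matrix.head_fin_const]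
        linear_combination (C^2 - Sn^2) * hsin - 2*Sn*C*hcos - 2*ρ*Sn*C*hsq
      · exact absurd rfl hij
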